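/- arXiv:2409.20396 — 7 statements merged into one kernel-verified Lean document; each statement's English description precedes it below -/
import Mathlib

section
/- For an agent i in group G_j located at x_i in [0,1], with cost c_i(y) = |y - x_i| + α · Σ_{k ∈ G_j \ {i}} (1 - |y - x_k|) where α ≥ 0 and the other |G_j|-1 group members are at locations x_k ∈ [0,1], the cost c_i(y) is non-decreasing in y on the region where y ≥ x_i and y ≥ x_k for all k (and symmetrically non-increasing toward the left when all x_k ≤ x_i ≤ y decreasing), for all possible placements of the group members, if and only if α ≤ 1/(|G_j| - 1). -/
/-- Consistency of Aversion holds for all placements of the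
`s` other group members (group size `s+1`) iff `α ≤ 1/(|G_j|-1) = 1/s`. -/
theorem consistency_of_aversion_iff (s : ℕ) (hs : 1 ≤ s) (α : ℝ) (hα : 0 ≤ α)
    (xi : ℝ) (hxi : xi ∈ Set.Icc (0:ℝ) 1)
    (cost : (Fin s → ℝ) → ℝ → ℝ)
    (hcost : ∀ x y, cost x y = |y - xi| + α * ∑ k, (1 - |y - x k|)) :
    (∀ x : Fin s → ℝ, (∀ k, x k ∈ Set.Icc (0:ℝ) 1) →
      ((∀ y y' : ℝ, xi ≤ y → (∀ k, x k ≤ y) → y ≤ y' → cost x y ≤ cost x y') ∧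
       (∀ y y' : ℝ, y ≤ y' → y' ≤ xi → (∀ k, y' ≤ x k) → cost x y' ≤ cost x y)))
    ↔ α ≤ 1 / (s : ℝ) := by
  have hs' : (0:ℝ) < s := by exact_mod_cast hs
  obtain ⟨hxi0, hxi1⟩ := hxi
  constructor
  · intro h
    have key := (h (fun _ => xi) (fun _ => ⟨hxi0, hxi1⟩)).1 1 2 hxi1
      (fun _ => hxi1) (by norm_num)
    rw [hcost, hcost] at key
    simp only [Finset.sum_const, Finset.card_fin, nsmul_eq_mul] at key
    rw [abs_of_nonneg (by linarith), abs_of_nonneg (by linarith)] at key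
    rw [le_div_iff₀ hs']
    nlinarith
  · intro hα1 x hx
    have key : α * s ≤ 1 := by rwa [le_div_iff₀ hs'] at hα1
    have esum : ∀ z : ℝ, (∀ k, x k ≤ z) →
        (∑ k, (1 - |z - x k|)) = s * (1 - z) + ∑ k, x k := by
      intro z hz
      have : (∑ k, (1 - |z - x k|)) = ∑ k, ((1 - z) + x k) := by
        refine Finset.sum_congr rfl fun k _ => ?_
        rw [abs_of_nonneg (by linarith [hz k])]; ring
      rw [this, Finset.sum_add_distrib, Finset.sum_const, Finset.card_fin,
        nsmul_eq_mul]
    have esum' : ∀ z : ℝ, (∀ k, z ≤ x k) →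
        (∑ k, (1 - |z - x k|)) = s * (1 + z) - ∑ k, x k := by
      intro z hz
      have : (∑ k, (1 - |z - x k|)) = ∑ k, ((1 + z) - x k) := by
        refine Finset.sum_congr rfl fun k _ => ?_
        rw [abs_of_nonpos (by linarith [hz k])]; ring
      rw [this, Finset.sum_sub_distrib, Finset.sum_const, Finset.card_fin,
        nsmul_eq_mul]
    constructor
    · intro y y' hy hk hyy'
      rw [hcost, hcost, esum y hk, esum y' (fun k => le_trans (hk k) hyy'),
        abs_of_nonneg (by linarith), abs_of_nonneg (by linarith)]
      nlinarith [mul_nonneg (sub_nonneg.2 hyy') (sub_nonneg.2 key)]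
    · intro y y' hyy' hy' hk
      rw [hcost, hcost, esum' y' hk, esum' y (fun k => le_trans hyy' (hk k)),
        abs_of_nonpos (by linarith), abs_of_nonpos (by linarith)]
      nlinarith [mul_nonneg (sub_nonneg.2 hyy') (sub_nonneg.2 key)]
end

section
/- Let y be a median of the locations x_1,...,x_n (i.e., at most n/2 agents lie strictly to each side) and let y* be any minimizer of SC(z) = Σ_i (w_i |z - x_i| + C_i) where w_i = 1 - C_i and C_i ∈ [0,1]. Then SC(y) ≤ 2 · SC(y*). -/
lemma median_key (n : ℕ) (x C w : Fin n → ℝ)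
    (hC : ∀ i, C i ∈ Set.Icc (0:ℝ) 1) (hw : ∀ i, w i = 1 - C i)
    (y ystar : ℝ) (hle : ystar ≤ y) (hd1 : y - ystar ≤ 1)
    (hmed : 2 * (Finset.univ.filter (fun i => x i < y)).card ≤ n) :
    ∑ i, (w i * |y - x i| + C i) ≤ 2 * ∑ i, (w i * |ystar - x i| + C i) := by
  classical
  set S := Finset.univ.filter (fun i => x i < y) with hS
  set T := Finset.univ.filter (fun i => ¬ x i < y) with hT
  set d := y - ystar with hdd
  have hd0 : 0 ≤ d := by simp [hdd]; linarith
  have hw0 : ∀ i, 0 ≤ w i := fun i => by have := (hC i).2; rw [hw i]; linarith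
  have hw1 : ∀ i, w i ≤ 1 := fun i => by have := (hC i).1; rw [hw i]; linarith
  have hC0 : ∀ i, 0 ≤ C i := fun i => (hC i).1
  have hcard : S.card + T.card = n := by
    have h := Finset.card_filter_add_card_filter_not
      (s := (Finset.univ : Finset (Fin n))) (p := fun i => x i < y)
    rw [Finset.card_univ, Fintype.card_fin] at h
    rw [hS, hT]
    convert h using 3
  have hST : S.card ≤ T.card := by omega
  have hsplit : ∀ f : Fin n → ℝ, ∑ i, f i = ∑ i ∈ S, f i + ∑ i ∈ T, f i :=
    fun f => (Finset.sum_filter_add_sum_filter_not _ _ _).symm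
  -- Step A
  have stepA : ∑ i, (w i * |y - x i| + C i)
      ≤ ∑ i, (w i * |ystar - x i| + C i) + d * ∑ i ∈ S, w i := by
    rw [hsplit (fun i => w i * |y - x i| + C i),
        hsplit (fun i => w i * |ystar - x i| + C i), Finset.mul_sum]
    have hTle : ∑ i ∈ T, (w i * |y - x i| + C i)
        ≤ ∑ i ∈ T, (w i * |ystar - x i| + C i) := by
      apply Finset.sum_le_sum
      intro i hi
      have hxi : y ≤ x i := by
        simp only [hT, Finset.mem_filter] at hi; linarith [hi.2]
      have h1 : |y - x i| = x i - y := by rw [abs_sub_comm]; exact abs_of_nonneg (by linarith)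
      have h2 : |ystar - x i| = x i - ystar := by rw [abs_sub_comm]; exact abs_of_nonneg (by linarith)
      have := hw0 i
      nlinarith
    have hSle : ∑ i ∈ S, (w i * |y - x i| + C i)
        ≤ ∑ i ∈ S, (w i * |ystar - x i| + C i) + ∑ i ∈ S, d * w i := by
      rw [← Finset.sum_add_distrib]
      apply Finset.sum_le_sum
      intro i _
      have habs : |y - x i| ≤ |ystar - x i| + d := by
        have : y - x i = (ystar - x i) + d := by rw [hdd]; ring
        rw [this]
        calc |(ystar - x i) + d| ≤ |ystar - x i| + |d| := abs_add_le _ _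
          _ = |ystar - x i| + d := by rw [abs_of_nonneg hd0]
      have := hw0 i
      nlinarith
    linarith
  -- Step B
  have stepB : d * ∑ i ∈ S, w i ≤ ∑ i, (w i * |ystar - x i| + C i) := by
    have hwS : ∑ i ∈ S, w i ≤ (S.card : ℝ) := by
      calc ∑ i ∈ S, w i ≤ ∑ i ∈ S, (1:ℝ) := Finset.sum_le_sum (fun i _ => hw1 i)
        _ = S.card := by simp
    have hwT : (T.card : ℝ) ≤ ∑ i ∈ T, w i + ∑ i ∈ T, C i := by
      have : ∑ i ∈ T, w i + ∑ i ∈ T, C i = ∑ i ∈ T, (1:ℝ) := by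
        rw [← Finset.sum_add_distrib]
        apply Finset.sum_congr rfl
        intro i _; rw [hw i]; ring
      rw [this]; simp
    have hCT : ∑ i ∈ T, C i ≤ ∑ i, C i := by
      apply Finset.sum_le_sum_of_subset_of_nonneg (Finset.filter_subset _ _)
      intro i _ _; exact hC0 i
    have hRHS : d * ∑ i ∈ T, w i + ∑ i, C i ≤ ∑ i, (w i * |ystar - x i| + C i) := by
      have h1 : d * ∑ i ∈ T, w i ≤ ∑ i ∈ T, w i * |ystar - x i| := by
        rw [Finset.mul_sum]
        apply Finset.sum_le_sum
        intro i hi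
        have hxi : y ≤ x i := by
          simp only [hT, Finset.mem_filter] at hi; linarith [hi.2]
        have h2 : |ystar - x i| = x i - ystar := by
          rw [abs_sub_comm]; exact abs_of_nonneg (by linarith)
        have := hw0 i
        nlinarith
      have h2 : ∑ i, C i = ∑ i ∈ S, C i + ∑ i ∈ T, C i := hsplit C
      have h3 : ∑ i, (w i * |ystar - x i| + C i)
          = ∑ i ∈ S, w i * |ystar - x i| + ∑ i ∈ S, C i
            + (∑ i ∈ T, w i * |ystar - x i| + ∑ i ∈ T, C i) := by
        rw [hsplit (fun i => w i * |ystar - x i| + C i),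
            Finset.sum_add_distrib, Finset.sum_add_distrib]
      have h4 : 0 ≤ ∑ i ∈ S, w i * |ystar - x i| :=
        Finset.sum_nonneg (fun i _ => mul_nonneg (hw0 i) (abs_nonneg _))
      linarith
    have hdT : d * (T.card : ℝ) ≤ d * ∑ i ∈ T, w i + ∑ i, C i := by
      have hTC0 : 0 ≤ ∑ i ∈ T, C i := Finset.sum_nonneg (fun i _ => hC0 i)
      nlinarith [mul_le_mul_of_nonneg_left hwT hd0]
    have hcard' : (S.card : ℝ) ≤ (T.card : ℝ) := by exact_mod_cast hST
    calc d * ∑ i ∈ S, w i ≤ d * (S.card : ℝ) := mul_le_mul_of_nonneg_left hwS hd0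
      _ ≤ d * (T.card : ℝ) := mul_le_mul_of_nonneg_left hcard' hd0
      _ ≤ d * ∑ i ∈ T, w i + ∑ i, C i := hdT
      _ ≤ ∑ i, (w i * |ystar - x i| + C i) := hRHS
  linarith

/-- the median location gives a 2-approximation to the optimal
social cost. -/
theorem median_two_approx (n : ℕ) (x C : Fin n → ℝ)
    (hx : ∀ i, x i ∈ Set.Icc (0:ℝ) 1) (hC : ∀ i, C i ∈ Set.Icc (0:ℝ) 1)
    (w : Fin n → ℝ) (hw : ∀ i, w i = 1 - C i)
    (SC : ℝ → ℝ) (hSC : ∀ z, SC z = ∑ i, (w i * |z - x i| + C i))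
    (y : ℝ) (hy : y ∈ Set.Icc (0:ℝ) 1)
    (hmed1 : 2 * (Finset.univ.filter (fun i => x i < y)).card ≤ n)
    (hmed2 : 2 * (Finset.univ.filter (fun i => y < x i)).card ≤ n)
    (ystar : ℝ) (hystar : ystar ∈ Set.Icc (0:ℝ) 1)
    (hopt : ∀ z ∈ Set.Icc (0:ℝ) 1, SC ystar ≤ SC z) :
    SC y ≤ 2 * SC ystar := by
  classical
  rw [hSC y, hSC ystar]
  rcases le_or_gt ystar y with h | h
  · exact median_key n x C w hC hw y ystar h (by linarith [hy.2, hystar.1]) hmed1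
  · have key := median_key n (fun i => -x i) C w hC hw (-y) (-ystar)
      (by linarith) (by linarith [hystar.2, hy.1]) ?_
    · have e1 : ∀ z : ℝ, ∑ i, (w i * |(-z) - (-x i)| + C i) = ∑ i, (w i * |z - x i| + C i) := by
        intro z
        apply Finset.sum_congr rfl
        intro i _
        have : |(-z) - (-x i)| = |z - x i| := by
          rw [show (-z) - (-x i) = -(z - x i) by ring, abs_neg]
        rw [this]
      rw [e1 y, e1 ystar] at key
      exact key
    · have : (Finset.univ.filter (fun i => (fun i => -x i) i < -y))
          = Finset.univ.filter (fun i => y < x i) := by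
        apply Finset.filter_congr
        intro i _
        simp
      rw [this]
      exact hmed2
end

section
/- Assume C_max = max_i C_i and C_min = min_i C_i with C_i ∈ [0,1]. If y is a median of x_1,...,x_n and y* minimizes SC(z) = Σ_i (w_i|z - x_i| + C_i) with w_i = 1 - C_i, then SC(y)/SC(y*) ≤ (1 + C_max)/(1 + C_min) whenever SC(y*) > 0. -/
open Finset

/-- Key lemma: if `y ≤ ystar`, `ystar - y ≤ 1`, and at most half the agents are
strictly right of `y`, then the cost at `y` is within factor `(1+Cmax)/(1+Cmin)`
of the cost at `ystar`. -/
lemma median_ratio_key (n : ℕ) (x C w : Fin n → ℝ)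
    (hC : ∀ i, C i ∈ Set.Icc (0:ℝ) 1) (hw : ∀ i, w i = 1 - C i)
    (Cmax Cmin : ℝ) (hle : ∀ i, C i ≤ Cmax) (hge : ∀ i, Cmin ≤ C i)
    (hCmin0 : 0 ≤ Cmin) (hCmax1 : Cmax ≤ 1) (hCC : Cmin ≤ Cmax)
    (y ystar : ℝ) (hyy : y ≤ ystar) (ht1 : ystar - y ≤ 1)
    (hmed : 2 * (Finset.univ.filter (fun i => y < x i)).card ≤ n) :
    ∑ i, (w i * |y - x i| + C i) ≤
      (1 + Cmax) / (1 + Cmin) * ∑ i, (w i * |ystar - x i| + C i) := by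
  set t := ystar - y with htdef
  have ht0 : 0 ≤ t := by simp only [htdef]; linarith
  set R := Finset.univ.filter (fun i => y < x i) with hRdef
  set L := Finset.univ.filter (fun i => ¬ y < x i) with hLdef
  have hwpos : ∀ i, 0 ≤ w i := by intro i; rw [hw i]; have := (hC i).2; linarith
  have hwub : ∀ i, w i ≤ 1 - Cmin := by intro i; rw [hw i]; have := hge i; linarith
  have hwlb : ∀ i, 1 - Cmax ≤ w i := by intro i; rw [hw i]; have := hle i; linarith
  have hcardsum : R.card + L.card = n := by
    rw [hRdef, hLdef, Finset.card_filter_add_card_filter_not]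
    simp
  have hRL : (R.card : ℝ) ≤ (L.card : ℝ) := by
    have : R.card ≤ L.card := by omega
    exact_mod_cast this
  have hRnn : (0:ℝ) ≤ (R.card : ℝ) := by positivity
  have hsplit : ∀ f : Fin n → ℝ, ∑ i, f i = ∑ i ∈ R, f i + ∑ i ∈ L, f i := by
    intro f
    rw [hRdef, hLdef]
    exact (Finset.sum_filter_add_sum_filter_not _ _ f).symm
  -- Step A : per-agent triangle-inequality bounds
  have hA_L : ∀ i ∈ L, w i * |y - x i| + C i ≤
      (w i * |ystar - x i| + C i) - (1 - Cmax) * t := by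
    intro i hi
    have hxi : x i ≤ y := by
      rw [hLdef] at hi
      simpa using not_lt.mp (Finset.mem_filter.mp hi).2
    rw [abs_of_nonneg (by linarith : (0:ℝ) ≤ y - x i),
        abs_of_nonneg (by linarith : (0:ℝ) ≤ ystar - x i)]
    have h1 : (1 - Cmax) * t ≤ w i * t :=
      mul_le_mul_of_nonneg_right (hwlb i) ht0
    nlinarith [hwpos i]
  have hA_R : ∀ i ∈ R, w i * |y - x i| + C i ≤
      (w i * |ystar - x i| + C i) + (1 - Cmin) * t := by
    intro i _
    have htri : |y - x i| - |ystar - x i| ≤ t := by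
      have := abs_sub_abs_le_abs_sub (y - x i) (ystar - x i)
      have h2 : |y - x i - (ystar - x i)| = t := by
        rw [show y - x i - (ystar - x i) = -(t) by ring, abs_neg,
            abs_of_nonneg ht0]
      linarith
    have h1 : w i * |y - x i| ≤ w i * |ystar - x i| + w i * t := by
      nlinarith [hwpos i]
    have h2 : w i * t ≤ (1 - Cmin) * t :=
      mul_le_mul_of_nonneg_right (hwub i) ht0
    linarith
  have hA : ∑ i, (w i * |y - x i| + C i) ≤
      (∑ i, (w i * |ystar - x i| + C i))
        + (1 - Cmin) * t * R.card - (1 - Cmax) * t * L.card := by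
    rw [hsplit (fun i => w i * |y - x i| + C i),
        hsplit (fun i => w i * |ystar - x i| + C i)]
    have h1 : ∑ i ∈ R, (w i * |y - x i| + C i) ≤
        ∑ i ∈ R, ((w i * |ystar - x i| + C i) + (1 - Cmin) * t) :=
      Finset.sum_le_sum hA_R
    have h2 : ∑ i ∈ L, (w i * |y - x i| + C i) ≤
        ∑ i ∈ L, ((w i * |ystar - x i| + C i) - (1 - Cmax) * t) :=
      Finset.sum_le_sum hA_L
    have e1 : ∑ i ∈ R, ((w i * |ystar - x i| + C i) + (1 - Cmin) * t) =
        (∑ i ∈ R, (w i * |ystar - x i| + C i)) + (R.card : ℝ) * ((1 - Cmin) * t) := by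
      rw [Finset.sum_add_distrib, Finset.sum_const, nsmul_eq_mul]
    have e2 : ∑ i ∈ L, ((w i * |ystar - x i| + C i) - (1 - Cmax) * t) =
        (∑ i ∈ L, (w i * |ystar - x i| + C i)) - (L.card : ℝ) * ((1 - Cmax) * t) := by
      rw [Finset.sum_sub_distrib, Finset.sum_const, nsmul_eq_mul]
    rw [e1] at h1
    rw [e2] at h2
    nlinarith [h1, h2]
  -- Step B : lower bound on the optimal cost
  have hB_L : ∀ i ∈ L, t + Cmin * (1 - t) ≤ w i * |ystar - x i| + C i := by
    intro i hi
    have hxi : x i ≤ y := by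
      rw [hLdef] at hi
      simpa using not_lt.mp (Finset.mem_filter.mp hi).2
    rw [abs_of_nonneg (by linarith : (0:ℝ) ≤ ystar - x i), hw i]
    have hd : t ≤ ystar - x i := by simp only [htdef]; linarith
    have hCi1 := (hC i).2
    have hCi0 := (hC i).1
    have hm : (1 - C i) * t ≤ (1 - C i) * (ystar - x i) :=
      mul_le_mul_of_nonneg_left hd (by linarith)
    nlinarith [hge i]
  have hB_R : ∀ i ∈ R, Cmin ≤ w i * |ystar - x i| + C i := by
    intro i _
    have := mul_nonneg (hwpos i) (abs_nonneg (ystar - x i))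
    have := hge i
    linarith
  have hB : (L.card : ℝ) * (t + Cmin * (1 - t)) + (R.card : ℝ) * Cmin ≤
      ∑ i, (w i * |ystar - x i| + C i) := by
    rw [hsplit (fun i => w i * |ystar - x i| + C i)]
    have h1 : ∑ i ∈ L, (t + Cmin * (1 - t)) ≤
        ∑ i ∈ L, (w i * |ystar - x i| + C i) := Finset.sum_le_sum hB_L
    have h2 : ∑ i ∈ R, Cmin ≤ ∑ i ∈ R, (w i * |ystar - x i| + C i) :=
      Finset.sum_le_sum hB_R
    rw [Finset.sum_const, nsmul_eq_mul] at h1 h2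
    linarith
  have hB' : (R.card : ℝ) * (t * (1 + Cmin)) ≤
      ∑ i, (w i * |ystar - x i| + C i) := by
    have hpos' : 0 ≤ t + Cmin * (1 - t) := by nlinarith
    have hm : (R.card : ℝ) * (t + Cmin * (1 - t)) ≤
        (L.card : ℝ) * (t + Cmin * (1 - t)) :=
      mul_le_mul_of_nonneg_right hRL hpos'
    nlinarith [mul_nonneg (mul_nonneg hRnn hCmin0)
      (by linarith : (0:ℝ) ≤ 2 - 2 * t)]
  -- Combine
  have h1Cmin : (0:ℝ) < 1 + Cmin := by linarith
  rw [div_mul_eq_mul_div, le_div_iff₀ h1Cmin]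
  have hkey : 0 ≤ (Cmax - Cmin) *
      ((∑ i, (w i * |ystar - x i| + C i)) - (R.card : ℝ) * (t * (1 + Cmin))) :=
    mul_nonneg (by linarith) (by linarith)
  have hmono : ((1 - Cmax) * t) * (R.card : ℝ) ≤ ((1 - Cmax) * t) * (L.card : ℝ) :=
    mul_le_mul_of_nonneg_left hRL (mul_nonneg (by linarith) ht0)
  have hA' : ∑ i, (w i * |y - x i| + C i) ≤
      (∑ i, (w i * |ystar - x i| + C i)) + (Cmax - Cmin) * (t * (R.card : ℝ)) := by
    nlinarith [hA, hmono]
  have hfin := mul_le_mul_of_nonneg_right hA' (le_of_lt h1Cmin)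
  nlinarith [hfin, hkey]

/-- the median location achieves ratio `(1 + C_max)/(1 + C_min)`. -/
theorem median_ratio_bound (n : ℕ) (x C : Fin n → ℝ)
    (hne : (Finset.univ : Finset (Fin n)).Nonempty)
    (hx : ∀ i, x i ∈ Set.Icc (0:ℝ) 1) (hC : ∀ i, C i ∈ Set.Icc (0:ℝ) 1)
    (w : Fin n → ℝ) (hw : ∀ i, w i = 1 - C i)
    (SC : ℝ → ℝ) (hSC : ∀ z, SC z = ∑ i, (w i * |z - x i| + C i))
    (Cmax Cmin : ℝ)
    (hCmax : Cmax = Finset.univ.sup' hne C)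
    (hCmin : Cmin = Finset.univ.inf' hne C)
    (y : ℝ) (hy : y ∈ Set.Icc (0:ℝ) 1)
    (hmed1 : 2 * (Finset.univ.filter (fun i => x i < y)).card ≤ n)
    (hmed2 : 2 * (Finset.univ.filter (fun i => y < x i)).card ≤ n)
    (ystar : ℝ) (hystar : ystar ∈ Set.Icc (0:ℝ) 1)
    (hopt : ∀ z ∈ Set.Icc (0:ℝ) 1, SC ystar ≤ SC z)
    (hpos : 0 < SC ystar) :
    SC y / SC ystar ≤ (1 + Cmax) / (1 + Cmin) := by
  have hle : ∀ i, C i ≤ Cmax := by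
    intro i; rw [hCmax]; exact Finset.le_sup' C (Finset.mem_univ i)
  have hge : ∀ i, Cmin ≤ C i := by
    intro i; rw [hCmin]; exact Finset.inf'_le C (Finset.mem_univ i)
  have hCmin0 : 0 ≤ Cmin := by
    obtain ⟨j, _, hj⟩ := Finset.exists_mem_eq_inf' hne C
    rw [hCmin, hj]; exact (hC j).1
  have hCmax1 : Cmax ≤ 1 := by
    obtain ⟨j, _, hj⟩ := Finset.exists_mem_eq_sup' hne C
    rw [hCmax, hj]; exact (hC j).2
  have hCC : Cmin ≤ Cmax := by
    obtain ⟨j⟩ := hne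
    exact le_trans (hge j) (hle j)
  have hkey : SC y ≤ (1 + Cmax) / (1 + Cmin) * SC ystar := by
    rw [hSC y, hSC ystar]
    rcases le_total y ystar with hyy | hyy
    · exact median_ratio_key n x C w hC hw Cmax Cmin hle hge hCmin0 hCmax1 hCC
        y ystar hyy (by have := hy.1; have := hystar.2; linarith) hmed2
    · have hmain := median_ratio_key n (fun i => -x i) C w hC hw Cmax Cmin
        hle hge hCmin0 hCmax1 hCC (-y) (-ystar) (by linarith)
        (by have := hy.2; have := hystar.1; linarith)
        (by
          have hcongr : (Finset.univ.filter (fun i => -y < -x i)) =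
              (Finset.univ.filter (fun i => x i < y)) := by
            apply Finset.filter_congr
            intro i _
            simp
          rw [hcongr]
          exact hmed1)
      have e1 : ∀ z : ℝ, ∑ i, (w i * |(-z) - (-x i)| + C i)
          = ∑ i, (w i * |z - x i| + C i) := by
        intro z
        apply Finset.sum_congr rfl
        intro i _
        rw [show (-z) - (-x i) = -(z - x i) by ring, abs_neg]
      rw [e1 y, e1 ystar] at hmain
      exact hmain
  rw [div_le_div_iff₀ hpos (by linarith : (0:ℝ) < 1 + Cmin)]
  have h1Cmin : (0:ℝ) < 1 + Cmin := by linarith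
  calc SC y * (1 + Cmin) ≤ ((1 + Cmax) / (1 + Cmin) * SC ystar) * (1 + Cmin) :=
        mul_le_mul_of_nonneg_right hkey (le_of_lt h1Cmin)
    _ = (1 + Cmax) * SC ystar := by field_simp
end

section
/- In a single group with externality factor α satisfying α(n-1) ≤ 1 and agents at x_1 ≤ ... ≤ x_n in [0,1], for every facility location y ∈ [x_1, x_n], the maximum cost satisfies max_i c_i(y) ≤ 2 · max_i c_i(y*), where y* = (x_1 + x_n)/2 (the minimizer of the maximum cost over [0,1]). -/
/-- in a single group, any facility between the leftmost and the
rightmost agent is a 2-approximation of the optimal maximum cost, attained at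
the midpoint. -/
theorem single_group_two_approx (n : ℕ) (hn : 2 ≤ n)
    (hne : (Finset.univ : Finset (Fin n)).Nonempty)
    (x : Fin n → ℝ) (hsorted : Monotone x)
    (hx : ∀ k, x k ∈ Set.Icc (0:ℝ) 1)
    (α : ℝ) (hα : 0 ≤ α) (hCoA : α * ((n : ℝ) - 1) ≤ 1)
    (c : Fin n → ℝ → ℝ)
    (hc : ∀ i y, c i y = |y - x i| + α * ∑ k ∈ Finset.univ.erase i, (1 - |y - x k|))
    (MC : ℝ → ℝ) (hMC : ∀ y, MC y = Finset.univ.sup' hne (fun i => c i y))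
    (y : ℝ)
    (hy : y ∈ Set.Icc (x ⟨0, by omega⟩) (x ⟨n - 1, by omega⟩)) :
    MC y ≤ 2 * MC ((x ⟨0, by omega⟩ + x ⟨n - 1, by omega⟩) / 2) := by
  set i0 : Fin n := ⟨0, by omega⟩
  set i1 : Fin n := ⟨n - 1, by omega⟩
  set a : ℝ := x i0 with ha
  set b : ℝ := x i1 with hb
  set m : ℝ := (a + b) / 2 with hm
  have hk0 : ∀ k : Fin n, i0 ≤ k := fun k => Fin.mk_le_of_le_val (Nat.zero_le _)
  have hk1 : ∀ k : Fin n, k ≤ i1 := fun k => by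
    have := k.isLt; exact Fin.le_def.mpr (by simp [i1]; omega)
  have hxk : ∀ k : Fin n, a ≤ x k ∧ x k ≤ b := fun k =>
    ⟨hsorted (hk0 k), hsorted (hk1 k)⟩
  have hab : a ≤ b := (hxk i0).2
  have ha0 : 0 ≤ a := (hx i0).1
  have hb1 : b ≤ 1 := (hx i1).2
  have hcarderase : ∀ i : Fin n, (Finset.univ.erase i).card = n - 1 := fun i => by
    rw [Finset.card_erase_of_mem (Finset.mem_univ i), Finset.card_univ, Fintype.card_fin]
  have hn1 : ((n - 1 : ℕ) : ℝ) = (n : ℝ) - 1 := by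
    have : (1:ℕ) ≤ n := by omega
    push_cast [Nat.cast_sub this]; ring
  -- lower bound on cost of agent i0 at midpoint
  have hS : ((n : ℝ) - 1) * (1/2) ≤ ∑ k ∈ Finset.univ.erase i0, (1 - |m - x k|) := by
    have := Finset.card_nsmul_le_sum (Finset.univ.erase i0)
      (fun k => 1 - |m - x k|) (1/2) (fun k _ => by
        have h1 := (hxk k).1; have h2 := (hxk k).2
        have habs : |m - x k| ≤ (b - a) / 2 := by
          rw [abs_le]; constructor <;> [skip; skip] <;> simp only [hm] <;> linarith
        have : b - a ≤ 1 := by linarith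
        linarith)
    rw [nsmul_eq_mul, hcarderase, hn1] at this
    linarith
  have hc0m : (b - a) / 2 + α * (((n:ℝ) - 1) * (1/2)) ≤ c i0 m := by
    rw [hc]
    have h1 : |m - x i0| = (b - a) / 2 := by
      rw [abs_of_nonneg (by simp only [hm, ← ha]; linarith)]
      simp only [hm, ← ha]; ring
    rw [h1]
    have := mul_le_mul_of_nonneg_left hS hα
    linarith
  have hMCm : (b - a) / 2 + α * (((n:ℝ) - 1) * (1/2)) ≤ MC m := by
    rw [hMC]
    exact le_trans hc0m (Finset.le_sup' (fun i => c i m) (Finset.mem_univ i0))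
  rw [hMC]
  apply Finset.sup'_le
  intro j _
  -- upper bound on c j y
  have hup : c j y ≤ (b - a) + α * ((n:ℝ) - 1) := by
    rw [hc]
    have h1 : |y - x j| ≤ b - a := by
      have h2 := (hxk j).1; have h3 := (hxk j).2
      rw [abs_le]; constructor <;> [skip; skip] <;> cases hy with
        | intro hl hr => linarith
    have h4 : ∑ k ∈ Finset.univ.erase j, (1 - |y - x k|) ≤ ((n:ℝ) - 1) := by
      have := Finset.sum_le_card_nsmul (Finset.univ.erase j)
        (fun k => 1 - |y - x k|) 1 (fun k _ => by
          show 1 - |y - x k| ≤ 1; have := abs_nonneg (y - x k); linarith)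
      rw [nsmul_eq_mul, hcarderase, hn1] at this
      linarith
    have := mul_le_mul_of_nonneg_left h4 hα
    linarith
  calc c j y ≤ (b - a) + α * ((n:ℝ) - 1) := hup
    _ = 2 * ((b - a) / 2 + α * (((n:ℝ) - 1) * (1/2))) := by ring
    _ ≤ 2 * MC m := by linarith
end

section
/- Let the agents be partitioned into groups with externality factors α_j satisfying α_j(|G_j|-1) ≤ 1. Let y = min_i x_i be the leftmost agent location and y* any minimizer of the maximum cost MC(z) = max_i c_i(z). Then MC(y) ≤ 3 · MC(y*), provided MC(y*) > 0 and y ≠ y*. -/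
/-- the Leftmost mechanism is a 3-approximation for the maximum
cost with multiple groups. -/
theorem leftmost_three_approx (n m : ℕ)
    (hne : (Finset.univ : Finset (Fin n)).Nonempty)
    (g : Fin n → Fin m) (α : Fin m → ℝ) (x : Fin n → ℝ)
    (hx : ∀ i, x i ∈ Set.Icc (0:ℝ) 1)
    (hα : ∀ j, 0 ≤ α j)
    (hCoA : ∀ j, α j * (((Finset.univ.filter fun i => g i = j).card : ℝ) - 1) ≤ 1)
    (c : Fin n → ℝ → ℝ)
    (hc : ∀ i y, c i y = |y - x i| + α (g i) *
        ∑ k ∈ (Finset.univ.filter fun k => g k = g i).erase i, (1 - |y - x k|))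
    (MC : ℝ → ℝ) (hMC : ∀ y, MC y = Finset.univ.sup' hne (fun i => c i y))
    (y : ℝ) (hy : y = Finset.univ.inf' hne x)
    (ystar : ℝ) (hystar : ystar ∈ Set.Icc (0:ℝ) 1)
    (hopt : ∀ z ∈ Set.Icc (0:ℝ) 1, MC ystar ≤ MC z)
    (hpos : 0 < MC ystar) (hneq : y ≠ ystar) :
    MC y ≤ 3 * MC ystar := by
  obtain ⟨i0, -, hi0⟩ := Finset.exists_mem_eq_inf' hne x
  have hxy : y = x i0 := by rw [hy, hi0]
  have habs : ∀ k, |ystar - x k| ≤ 1 := by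
    intro k
    have h1 := (hx k).1; have h2 := (hx k).2
    have h3 := hystar.1; have h4 := hystar.2
    rw [abs_le]; constructor <;> linarith
  have hdelta : |y - ystar| ≤ MC ystar := by
    have h1 : |ystar - x i0| ≤ c i0 ystar := by
      rw [hc]
      have hnn : 0 ≤ α (g i0) *
          ∑ k ∈ (Finset.univ.filter fun k => g k = g i0).erase i0, (1 - |ystar - x k|) :=
        mul_nonneg (hα _) (Finset.sum_nonneg fun k _ => by linarith [habs k])
      linarith
    have h2 : c i0 ystar ≤ MC ystar := by
      rw [hMC]; exact Finset.le_sup' (fun j => c j ystar) (Finset.mem_univ i0)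
    rw [hxy, abs_sub_comm]; linarith
  have hmain : ∀ i, c i y ≤ MC ystar + 2 * |y - ystar| := by
    intro i
    set S := (Finset.univ.filter fun k => g k = g i).erase i with hS
    have hci : c i ystar ≤ MC ystar := by
      rw [hMC]; exact Finset.le_sup' (fun j => c j ystar) (Finset.mem_univ i)
    have hcard : (S.card : ℝ) = ((Finset.univ.filter fun k => g k = g i).card : ℝ) - 1 := by
      have hmem : i ∈ (Finset.univ.filter fun k => g k = g i) := by
        simp
      rw [hS, Finset.card_erase_of_mem hmem]
      have : 1 ≤ (Finset.univ.filter fun k => g k = g i).card :=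
        Finset.card_pos.mpr ⟨i, hmem⟩
      push_cast [Nat.cast_sub this]; ring
    have hαS : α (g i) * (S.card : ℝ) ≤ 1 := by
      rw [hcard]; exact hCoA (g i)
    have hsum : ∑ k ∈ S, (1 - |y - x k|) ≤
        (∑ k ∈ S, (1 - |ystar - x k|)) + S.card * |y - ystar| := by
      have : ∑ k ∈ S, (1 - |y - x k|) - ∑ k ∈ S, (1 - |ystar - x k|)
          = ∑ k ∈ S, (|ystar - x k| - |y - x k|) := by
        rw [← Finset.sum_sub_distrib]; apply Finset.sum_congr rfl; intro k _; ring
      have hb : ∑ k ∈ S, (|ystar - x k| - |y - x k|) ≤ ∑ k ∈ S, |y - ystar| := by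
        apply Finset.sum_le_sum
        intro k _
        calc |ystar - x k| - |y - x k| ≤ |(ystar - x k) - (y - x k)| :=
              abs_sub_abs_le_abs_sub _ _
          _ = |y - ystar| := by rw [abs_sub_comm]; ring_nf
      rw [Finset.sum_const, nsmul_eq_mul] at hb
      linarith
    have habsxi : |y - x i| ≤ |ystar - x i| + |y - ystar| := by
      calc |y - x i| = |(y - ystar) + (ystar - x i)| := by ring_nf
        _ ≤ |y - ystar| + |ystar - x i| := abs_add_le _ _
        _ = |ystar - x i| + |y - ystar| := by ring
    have hαnn := hα (g i)
    have hmul : α (g i) * ∑ k ∈ S, (1 - |y - x k|) ≤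
        α (g i) * ((∑ k ∈ S, (1 - |ystar - x k|)) + S.card * |y - ystar|) :=
      mul_le_mul_of_nonneg_left hsum hαnn
    have hαScard : α (g i) * ((S.card : ℝ) * |y - ystar|) ≤ 1 * |y - ystar| := by
      rw [← mul_assoc]
      exact mul_le_mul_of_nonneg_right hαS (abs_nonneg _)
    have hcy := hc i y
    have hcys := hc i ystar
    rw [← hS] at hcy hcys
    nlinarith [abs_nonneg (y - ystar)]
  have hfin : MC y ≤ MC ystar + 2 * |y - ystar| := by
    rw [hMC]
    exact Finset.sup'_le _ _ fun i _ => hmain i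
  linarith
end

section
/- For all c ∈ [0,1] and d ∈ [0, (1-c)/(2-c)], the quantity 1 + ((1+c²)d + c - c²)/((1-c)d + c) is at most 17/8, with equality when c = 1/4 and d = (1-c)/(2-c) = 3/7. -/
/-- the optimization step of the 17/8 bound for LoF-M. -/
theorem lof_final_bound :
    (∀ c d : ℝ, c ∈ Set.Icc (0:ℝ) 1 → 0 ≤ d → d ≤ (1 - c) / (2 - c) →
      1 + ((1 + c^2) * d + c - c^2) / ((1 - c) * d + c) ≤ 17 / 8) ∧
    (1 + ((1 + (1/4:ℝ)^2) * (3/7) + 1/4 - (1/4)^2) / ((1 - 1/4) * (3/7) + 1/4)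
        = 17 / 8) ∧
    ((1 - (1/4:ℝ)) / (2 - 1/4) = 3 / 7) := by
  refine ⟨?_, by norm_num, by norm_num⟩
  intro c d hc hd hle
  obtain ⟨hc0, hc1⟩ := hc
  have h2c : (0:ℝ) < 2 - c := by linarith
  have hle' : d * (2 - c) ≤ 1 - c := by
    rw [div_eq_mul_inv] at hle
    calc d * (2 - c) ≤ (1 - c) * (2 - c)⁻¹ * (2 - c) := by
          apply mul_le_mul_of_nonneg_right hle (le_of_lt h2c)
      _ = 1 - c := by field_simp
  have hD : 0 ≤ (1 - c) * d + c := by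
    have : 0 ≤ (1 - c) * d := mul_nonneg (by linarith) hd
    linarith
  rcases eq_or_lt_of_le hD with hD0 | hDpos
  · have hcz : c = 0 := by
      have h1 : 0 ≤ (1 - c) * d := mul_nonneg (by linarith) hd
      linarith
    have hdz : d = 0 := by
      rw [hcz] at hD0; nlinarith
    rw [hcz, hdz]; norm_num
  · have key : ((1 + c^2) * d + c - c^2) / ((1 - c) * d + c) ≤ 9 / 8 := by
      rw [div_le_iff₀ hDpos]
      nlinarith [sq_nonneg (1 - 4*c), mul_nonneg hd hc0, sq_nonneg c,
        mul_nonneg (mul_nonneg hd hc0) hc0]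
    linarith
end

section
/- Consider two groups: n/2 agents of group 1 at location 0 with α_1 = 0, and n/2 agents of group 2 at location 1 with α_2·(n/2 - 1) = 2 - √2. Then the minimizer of the maximum cost MC(y) = max_i c_i(y) over [0,1] is y* = √2/2, and for any y ≤ (1+2√2)/7, MC(y)/MC(y*) ≥ 2(1+2√2)/7. -/
/-- lower-bound profile for the maximum cost under group
misreporting: agents of group 1 at 0 (cost `|y|`) and agents of group 2 at 1
(cost `(1-c₂)|y-1| + c₂` with `c₂ = α₂(n/2 - 1) = 2 - √2`).  The optimal
facility is `√2/2`, and any `y ≤ (1+2√2)/7` has ratio at least `2(1+2√2)/7`. -/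
theorem mc_group_lower_bound_profile (c2 : ℝ) (hc2 : c2 = 2 - Real.sqrt 2)
    (MC : ℝ → ℝ) (hMC : ∀ y, MC y = max |y| ((1 - c2) * |y - 1| + c2)) :
    (∀ y ∈ Set.Icc (0:ℝ) 1, MC (Real.sqrt 2 / 2) ≤ MC y) ∧
    (∀ y ∈ Set.Icc (0:ℝ) ((1 + 2 * Real.sqrt 2) / 7),
      2 * (1 + 2 * Real.sqrt 2) / 7 ≤ MC y / MC (Real.sqrt 2 / 2)) := by
  have hs : Real.sqrt 2 * Real.sqrt 2 = 2 := Real.mul_self_sqrt (by norm_num)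
  have hs1 : 1 < Real.sqrt 2 := by nlinarith [Real.sqrt_nonneg 2]
  have hs2 : Real.sqrt 2 < 3/2 := by nlinarith [Real.sqrt_nonneg 2]
  set s := Real.sqrt 2 with hsdef
  have hstar : MC (s/2) = s/2 := by
    rw [hMC]
    have h1 : |s/2| = s/2 := abs_of_nonneg (by linarith)
    have h2 : |s/2 - 1| = 1 - s/2 := by rw [abs_of_nonpos (by linarith)]; ring
    rw [h1, h2, hc2]
    have h3 : (1 - (2 - s)) * (1 - s/2) + (2 - s) = s/2 := by nlinarith
    rw [h3, max_self]
  constructor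
  · intro y hy
    rw [hstar, hMC]
    rcases le_or_gt (s/2) y with h | h
    · exact le_max_of_le_left (by rw [abs_of_nonneg hy.1]; exact h)
    · apply le_max_of_le_right
      rw [abs_of_nonpos (by linarith [hy.2]), hc2]
      nlinarith
  · intro y hy
    rw [hstar, hMC]
    have hy2 := hy.2
    have hy1 : y ≤ 1 := by nlinarith
    have h2 : (1 - c2) * |y - 1| + c2 = 1 - (s - 1) * y := by
      rw [abs_of_nonpos (by linarith), hc2]; ring
    have hMCy : (4 + s) / 7 ≤ max |y| ((1 - c2) * |y - 1| + c2) := by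
      apply le_max_of_le_right
      rw [h2]
      nlinarith
    have hpos : (0:ℝ) < s / 2 := by linarith
    rw [le_div_iff₀ hpos]
    have heq : 2 * (1 + 2 * s) / 7 * (s / 2) = (4 + s) / 7 := by nlinarith
    linarith [heq ▸ hMCy]
end
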